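/- Let (E,d) be a compact metric space, let c > 1, and let g : [0,∞) → [0,∞) be a monotone increasing continuous function with g(0) = 0 and g(2r) ≤ c·g(r) for every r ≥ 0. Let μ be a finite Borel measure on E and let A be a Borel subset of E. If for every x ∈ A one has limsup_{n→∞} μ(B(x,2^{−n}))/g(2^{−n}) ≥ 1, then g-m(A) ≤ 2c³ μ(A). -/
import Mathlib


open MeasureTheory Filter Set
open scoped ENNReal NNReal Topology

/-- Lemma 2.1 (ii): upper comparison bound for generalized
Hausdorff measures on a compact metric space. -/
theorem hausdorff_upper_comparison
    {E : Type*} [MetricSpace E] [CompactSpace E] [MeasurableSpace E] [BorelSpace E]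
    (c : ℝ) (hc : 1 < c)
    (g : ℝ → ℝ) (hg_mono : Monotone g) (hg_cont : Continuous g)
    (hg_nonneg : ∀ r, 0 ≤ g r) (hg0 : g 0 = 0)
    (hg_doubling : ∀ r ≥ (0:ℝ), g (2 * r) ≤ c * g r)
    (μ : Measure E) [IsFiniteMeasure μ]
    (A : Set E) (hA : MeasurableSet A)
    (hlim : ∀ x ∈ A,
      1 ≤ Filter.limsup
        (fun n : ℕ => μ (Metric.ball x ((2:ℝ) ^ (-(n:ℤ)))) /
          ENNReal.ofReal (g ((2:ℝ) ^ (-(n:ℤ))))) Filter.atTop) :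
    Measure.mkMetric (fun d : ENNReal => ENNReal.ofReal (g d.toReal)) A ≤
      ENNReal.ofReal (2 * c ^ 3) * μ A := by
  classical
  have hc0 : (0:ℝ) < c := lt_trans one_pos hc
  set m : ℝ≥0∞ → ℝ≥0∞ := fun d => ENNReal.ofReal (g d.toReal) with hm
  set C : ℝ≥0∞ := ENNReal.ofReal (2 * c ^ 3) with hC
  have hCtop : C ≠ ∞ := ENNReal.ofReal_ne_top
  have hC2 : C = 2 * ENNReal.ofReal (c ^ 3) := by
    rw [hC, ENNReal.ofReal_mul (by norm_num : (0:ℝ) ≤ 2), ENNReal.ofReal_ofNat]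
  -- basic facts about the dyadic radii
  have hρ_eq : ∀ n : ℕ, (2:ℝ) ^ (-(n:ℤ)) = (1/2:ℝ) ^ n := by
    intro n; rw [zpow_neg, zpow_natCast, one_div, inv_pow]
  have hρ_pos : ∀ n : ℕ, (0:ℝ) < (2:ℝ) ^ (-(n:ℤ)) := fun n => zpow_pos two_pos _
  have hρ_anti : ∀ {a b : ℕ}, a ≤ b → (2:ℝ) ^ (-(b:ℤ)) ≤ (2:ℝ) ^ (-(a:ℤ)) := by
    intro a b hab
    rw [hρ_eq, hρ_eq]
    exact pow_le_pow_of_le_one (by norm_num) (by norm_num) hab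
  -- reduce to an ε of room
  refine ENNReal.le_of_forall_pos_le_add fun ε hε hfin => ?_
  have hεne : ((ε : ℝ≥0∞)) ≠ 0 := by
    simpa using (ENNReal.coe_ne_zero.2 (ne_of_gt hε))
  set δ : ℝ≥0∞ := (ε : ℝ≥0∞) / C with hδ
  have hδ0 : δ ≠ 0 := by
    rw [hδ]
    simp only [ne_eq, ENNReal.div_eq_zero_iff, not_or]
    exact ⟨hεne, hCtop⟩
  -- choose an open set U ⊇ A with μ U ≤ μ A + δ
  obtain ⟨U, hAU, hUopen, hμU⟩ := Set.exists_isOpen_lt_add A (measure_ne_top μ A) hδ0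
  -- g is frequently dominated by the measure of balls
  have freq : ∀ x ∈ A, ∀ N : ℕ, ∃ n, N ≤ n ∧
      ENNReal.ofReal (g ((2:ℝ)^(-(n:ℤ)))) ≤ 2 * μ (Metric.ball x ((2:ℝ)^(-(n:ℤ)))) := by
    intro x hx N
    by_contra h
    push_neg at h
    have hle : Filter.limsup (fun n : ℕ => μ (Metric.ball x ((2:ℝ)^(-(n:ℤ)))) /
        ENNReal.ofReal (g ((2:ℝ)^(-(n:ℤ))))) Filter.atTop ≤ 1/2 := by
      refine Filter.limsup_le_of_le (by isBoundedDefault) ?_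
      filter_upwards [Filter.eventually_atTop.2 ⟨N, fun n hn => h n hn⟩] with n hn
      set a := μ (Metric.ball x ((2:ℝ)^(-(n:ℤ)))) with ha
      set b := ENNReal.ofReal (g ((2:ℝ)^(-(n:ℤ)))) with hb
      have hb0 : b ≠ 0 := by
        intro hb'
        rw [hb'] at hn
        exact absurd hn (by simp)
      have hbt : b ≠ ∞ := ENNReal.ofReal_ne_top
      rw [ENNReal.div_le_iff hb0 hbt]
      have h2 : 2 * a ≤ b := hn.le
      have e : (1/2 : ℝ≥0∞) * 2 = 1 := by
        rw [one_div]
        exact ENNReal.inv_mul_cancel two_ne_zero ENNReal.ofNat_ne_top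
      calc a = 1/2 * 2 * a := by rw [e, one_mul]
        _ = 1/2 * (2 * a) := mul_assoc _ _ _
        _ ≤ 1/2 * b := mul_le_mul_right h2 _
    exact absurd ((hlim x hx).trans hle)
      (not_le.2 (by simpa using ENNReal.half_lt_self one_ne_zero ENNReal.one_ne_top))
  -- key: choose good radii
  have key : ∀ x, x ∈ A → ∀ k : ℕ, ∃ n : ℕ, k ≤ n ∧
      Metric.closedBall x ((2:ℝ)^(-(n:ℤ))) ⊆ U ∧
      ENNReal.ofReal (g ((2:ℝ)^(-(n:ℤ)))) ≤ 2 * μ (Metric.ball x ((2:ℝ)^(-(n:ℤ)))) := by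
    intro x hx k
    obtain ⟨εx, hεx, hball⟩ := Metric.isOpen_iff.1 hUopen x (hAU hx)
    obtain ⟨N1, hN1⟩ := exists_pow_lt_of_lt_one hεx (by norm_num : (1/2:ℝ) < 1)
    obtain ⟨n, hn, hmeas⟩ := freq x hx (max k N1)
    refine ⟨n, le_trans (le_max_left _ _) hn, ?_, hmeas⟩
    refine subset_trans (Metric.closedBall_subset_ball ?_) hball
    calc (2:ℝ)^(-(n:ℤ)) ≤ (2:ℝ)^(-(N1:ℤ)) := hρ_anti (le_trans (le_max_right _ _) hn)
      _ = (1/2:ℝ)^N1 := hρ_eq N1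
      _ < εx := hN1
  choose! nfun hge hsubU hmeas using key
  set ρ : ℕ → E → ℝ := fun k x => (2:ℝ) ^ (-(nfun x k : ℤ)) with hρ
  have hρpos : ∀ k x, 0 < ρ k x := fun k x => hρ_pos _
  have hρle : ∀ k x, x ∈ A → ρ k x ≤ (1/2:ℝ)^k := by
    intro k x hx
    rw [hρ]
    calc (2:ℝ) ^ (-(nfun x k : ℤ)) ≤ (2:ℝ) ^ (-(k:ℤ)) := hρ_anti (hge x hx k)
      _ = (1/2:ℝ)^k := hρ_eq k
  -- Vitali covering for each scale k
  have vit : ∀ k : ℕ, ∃ u, u ⊆ A ∧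
      (u.PairwiseDisjoint fun a => Metric.closedBall a (ρ k a)) ∧
      ∀ a ∈ A, ∃ b ∈ u,
        Metric.closedBall a (ρ k a) ⊆ Metric.closedBall b (7/2 * ρ k b) := by
    intro k
    obtain ⟨u, h1, h2, h3⟩ :=
      Vitali.exists_disjoint_subfamily_covering_enlargement_closedBall A id (ρ k) 1
        (fun a ha => by
          calc ρ k a ≤ (1/2:ℝ)^k := hρle k a ha
            _ ≤ (1/2:ℝ)^0 := pow_le_pow_of_le_one (by norm_num) (by norm_num) (Nat.zero_le k)
            _ = 1 := by norm_num)
        (7/2) (by norm_num)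
    exact ⟨u, h1, by simpa using h2, by simpa using h3⟩
  choose u hu_sub hu_disj hu_cov using vit
  have hcnt : ∀ k, (u k).Countable := by
    intro k
    refine (hu_disj k).countable_of_nonempty_interior fun x hxu => ?_
    exact ⟨x, Metric.ball_subset_interior_closedBall (Metric.mem_ball_self (hρpos k x))⟩
  haveI : ∀ k : ℕ, Countable (u k) := fun k => (hcnt k).to_subtype
  -- the covering by enlarged balls
  have hdiam : ∀ (k : ℕ) (i : u k),
      EMetric.diam (Metric.closedBall (i:E) (7/2 * ρ k i)) ≤
        ENNReal.ofReal (7 * (1/2:ℝ)^k) := by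
    intro k i
    refine EMetric.diam_le fun x hx y hy => ?_
    rw [edist_dist]
    refine ENNReal.ofReal_le_ofReal ?_
    have hxi : dist x (i:E) ≤ 7/2 * ρ k i := Metric.mem_closedBall.1 hx
    have hyi : dist y (i:E) ≤ 7/2 * ρ k i := Metric.mem_closedBall.1 hy
    have hρk : ρ k (i:E) ≤ (1/2:ℝ)^k := hρle k _ (hu_sub k i.2)
    calc dist x y ≤ dist x (i:E) + dist y (i:E) := dist_triangle_right x y (i:E)
      _ ≤ 7/2 * ρ k i + 7/2 * ρ k i := add_le_add hxi hyi
      _ = 7 * ρ k i := by ring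
      _ ≤ 7 * (1/2:ℝ)^k := by nlinarith
  have hcov : ∀ k : ℕ, A ⊆ ⋃ i : u k, Metric.closedBall (i:E) (7/2 * ρ k i) := by
    intro k x hx
    obtain ⟨b, hb, hsub⟩ := hu_cov k x hx
    exact Set.mem_iUnion.2 ⟨⟨b, hb⟩, hsub (Metric.mem_closedBall_self (hρpos k x).le)⟩
  have hmk : Measure.mkMetric m A ≤
      Filter.liminf (fun k : ℕ =>
        ∑' i : u k, m (EMetric.diam (Metric.closedBall (i:E) (7/2 * ρ k i)))) Filter.atTop := by
    refine Measure.mkMetric_le_liminf_tsum A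
      (fun k : ℕ => ENNReal.ofReal (7 * (1/2:ℝ)^k)) ?_
      (fun k (i : u k) => Metric.closedBall (i:E) (7/2 * ρ k i))
      (Filter.Eventually.of_forall hdiam) (Filter.Eventually.of_forall hcov) m
    have : Filter.Tendsto (fun k : ℕ => 7 * (1/2:ℝ)^k) Filter.atTop (nhds 0) := by
      simpa using (tendsto_pow_atTop_nhds_zero_of_lt_one
        (by norm_num : (0:ℝ) ≤ 1/2) (by norm_num : (1/2:ℝ) < 1)).const_mul 7
    simpa using ENNReal.tendsto_ofReal this
  -- bound each sum
  have hbound : ∀ k : ℕ,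
      (∑' i : u k, m (EMetric.diam (Metric.closedBall (i:E) (7/2 * ρ k i)))) ≤ C * μ U := by
    intro k
    have step : ∀ i : u k,
        m (EMetric.diam (Metric.closedBall (i:E) (7/2 * ρ k i))) ≤
          C * μ (Metric.closedBall (i:E) (ρ k i)) := by
      intro i
      have hiA : (i:E) ∈ A := hu_sub k i.2
      set rr := ρ k (i:E) with hrr
      have hrpos : 0 < rr := hρpos k _
      have hdiam' : (EMetric.diam (Metric.closedBall (i:E) (7/2 * rr))).toReal ≤ 7 * rr := by
        refine ENNReal.toReal_le_of_le_ofReal (by positivity) ?_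
        refine EMetric.diam_le fun x hx y hy => ?_
        rw [edist_dist]
        refine ENNReal.ofReal_le_ofReal ?_
        calc dist x y ≤ dist x (i:E) + dist y (i:E) := dist_triangle_right x y (i:E)
          _ ≤ 7/2 * rr + 7/2 * rr := add_le_add (Metric.mem_closedBall.1 hx) (Metric.mem_closedBall.1 hy)
          _ = 7 * rr := by ring
      have h8 : g (8 * rr) ≤ c^3 * g rr := by
        have h1 := hg_doubling (4*rr) (by positivity)
        have h2 := hg_doubling (2*rr) (by positivity)
        have h3 := hg_doubling rr hrpos.le
        have e1 : (8:ℝ) * rr = 2 * (4 * rr) := by ring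
        have e2 : (4:ℝ) * rr = 2 * (2 * rr) := by ring
        calc g (8 * rr) = g (2 * (4 * rr)) := by rw [e1]
          _ ≤ c * g (4 * rr) := h1
          _ = c * g (2 * (2 * rr)) := by rw [e2]
          _ ≤ c * (c * g (2 * rr)) := mul_le_mul_of_nonneg_left h2 hc0.le
          _ ≤ c * (c * (c * g rr)) :=
              mul_le_mul_of_nonneg_left (mul_le_mul_of_nonneg_left h3 hc0.le) hc0.le
          _ = c^3 * g rr := by ring
      calc m (EMetric.diam (Metric.closedBall (i:E) (7/2 * rr)))
          = ENNReal.ofReal (g ((EMetric.diam (Metric.closedBall (i:E) (7/2 * rr))).toReal)) := rfl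
        _ ≤ ENNReal.ofReal (c^3 * g rr) := by
            refine ENNReal.ofReal_le_ofReal ?_
            calc g ((EMetric.diam (Metric.closedBall (i:E) (7/2 * rr))).toReal)
                ≤ g (7 * rr) := hg_mono hdiam'
              _ ≤ g (8 * rr) := hg_mono (by nlinarith)
              _ ≤ c^3 * g rr := h8
        _ = ENNReal.ofReal (c^3) * ENNReal.ofReal (g rr) := by
            rw [ENNReal.ofReal_mul (by positivity)]
        _ ≤ ENNReal.ofReal (c^3) * (2 * μ (Metric.ball (i:E) rr)) :=
            mul_le_mul_right (hmeas (i:E) hiA k) _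
        _ ≤ ENNReal.ofReal (c^3) * (2 * μ (Metric.closedBall (i:E) rr)) := by
            gcongr
            exact Metric.ball_subset_closedBall
        _ = C * μ (Metric.closedBall (i:E) rr) := by
            rw [hC2]; ring
    calc (∑' i : u k, m (EMetric.diam (Metric.closedBall (i:E) (7/2 * ρ k i))))
        ≤ ∑' i : u k, C * μ (Metric.closedBall (i:E) (ρ k i)) := ENNReal.tsum_le_tsum step
      _ = C * ∑' i : u k, μ (Metric.closedBall (i:E) (ρ k i)) := ENNReal.tsum_mul_left
      _ = C * μ (⋃ i : u k, Metric.closedBall (i:E) (ρ k i)) := by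
          rw [measure_iUnion ?_ fun i => measurableSet_closedBall]
          intro i j hij
          exact hu_disj k i.2 j.2 (Subtype.coe_injective.ne hij)
      _ ≤ C * μ U := by
          gcongr
          exact Set.iUnion_subset fun i => hsubU (i:E) (hu_sub k i.2) k
  -- put everything together
  calc Measure.mkMetric m A
      ≤ Filter.liminf (fun k : ℕ =>
          ∑' i : u k, m (EMetric.diam (Metric.closedBall (i:E) (7/2 * ρ k i)))) Filter.atTop := hmk
    _ ≤ C * μ U := by
        refine le_trans (Filter.liminf_le_liminf (Filter.Eventually.of_forall hbound)) ?_
        simp [Filter.liminf_const]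
    _ ≤ C * (μ A + δ) := mul_le_mul_right hμU.le C
    _ = C * μ A + C * δ := by ring
    _ ≤ C * μ A + ε := by
        gcongr
        rw [hδ]
        exact ENNReal.mul_div_le
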